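/- In the first-order tangent algebra A = K[X]⧸((X - C s)(X - C t)), define a partial product u ⋆ w := u - algebraMap K A (α(u)) + w for u, w ∈ A with α(u) = β(w), and κ(u) := algebraMap K A (α(u) + β(u)) - u. Then A is a groupoid with source α, target β, units algebraMap K A λ (λ ∈ K), and inversion κ; explicitly: (i) if α(u) = β(w) then α(u ⋆ w) = α(w) and β(u ⋆ w) = β(u); (ii) if α(u) = β(w) and α(w) = β(z) then (u ⋆ w) ⋆ z = u ⋆ (w ⋆ z); (iii) u ⋆ algebraMap K A (α(u)) = u and algebraMap K A (β(u)) ⋆ u = u; (iv) u ⋆ κ(u) = algebraMap K A (β(u)) and κ(u) ⋆ u = algebraMap K A (α(u)). -/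

import Mathlib

open Polynomial

/-- The defining ideal of the first-order tangent algebra `K_{(t,s)}`. -/
noncomputable abbrev tIdeal (K : Type*) [CommRing K] (t s : K) : Ideal (Polynomial K) :=
  Ideal.span {(X - C s) * (X - C t)}

/-- The first-order tangent algebra `K_{(t,s)} = K[X] ⧸ ((X - C s) * (X - C t))`. -/
abbrev TangentAlgebra₁ (K : Type*) [CommRing K] (t s : K) :=
  Polynomial K ⧸ tIdeal K t s

/-- The first-order tangent algebra is a groupoid for the partial product
`u ⋆ w = u - algebraMap K A (α u) + w` (defined when `α u = β w`), with source `α`,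
target `β`, units `algebraMap K A λ`, and inversion `κ u = algebraMap K A (α u + β u) - u`. -/
theorem tangentAlgebra_groupoid (K : Type*) [CommRing K] (t s : K)
    (α β : TangentAlgebra₁ K t s →ₐ[K] K)
    (hα : ∀ P : Polynomial K, α (Ideal.Quotient.mk (tIdeal K t s) P) = P.eval s)
    (hβ : ∀ P : Polynomial K, β (Ideal.Quotient.mk (tIdeal K t s) P) = P.eval t)
    (star : TangentAlgebra₁ K t s → TangentAlgebra₁ K t s → TangentAlgebra₁ K t s)
    (hstar : ∀ u w, star u w = u - algebraMap K (TangentAlgebra₁ K t s) (α u) + w)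
    (κ : TangentAlgebra₁ K t s → TangentAlgebra₁ K t s)
    (hκ : ∀ u, κ u = algebraMap K (TangentAlgebra₁ K t s) (α u + β u) - u) :
    (∀ u w, α u = β w → α (star u w) = α w ∧ β (star u w) = β u) ∧
    (∀ u w z, α u = β w → α w = β z → star (star u w) z = star u (star w z)) ∧
    (∀ u, star u (algebraMap K (TangentAlgebra₁ K t s) (α u)) = u ∧
          star (algebraMap K (TangentAlgebra₁ K t s) (β u)) u = u) ∧
    (∀ u, star u (κ u) = algebraMap K (TangentAlgebra₁ K t s) (β u) ∧
          star (κ u) u = algebraMap K (TangentAlgebra₁ K t s) (α u)) := by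
  have hαs : ∀ u w, α (star u w) = α u - α u + α w := by
    intro u w; rw [hstar]; simp
  have hβs : ∀ u w, β (star u w) = β u - α u + β w := by
    intro u w; rw [hstar]; simp
  refine ⟨?_, ?_, ?_, ?_⟩
  · intro u w h
    constructor
    · rw [hαs]; ring
    · rw [hβs, h]; ring
  · intro u w z h1 h2
    rw [hstar (star u w), hstar u w, hstar u, hstar w]
    simp only [map_sub, map_add, AlgHom.commutes, Algebra.algebraMap_self, RingHom.id_apply]
    ring
  · intro u
    constructor
    · rw [hstar]; simp
    · rw [hstar]; simp
  · intro u
    have hκα : α (κ u) = β u := by rw [hκ]; simp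
    constructor
    · rw [hstar, hκ]; push_cast [map_add]; ring
    · rw [hstar, hκα, hκ]; push_cast [map_add]; ring
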